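/- Let K be a Hopf *-algebra with twist F satisfying F^{*⊗*} = (S⊗S)(F₂₁), and A a K-module *-algebra. Then the original involution * of A is antimultiplicative for the twisted product: (a •_F b)* = b* •_F a*, where a •_F b = (F̄ᵅ▷a)(F̄_α▷b). -/

import Mathlib

/-! STATEMENT 14: the involution of a module *-algebra is antimultiplicative for the twisted product. -/

noncomputable section
open TensorProduct

variable (𝕜 : Type*) [CommRing 𝕜]
variable (K : Type*) [Ring K] [HopfAlgebra 𝕜 K]
/-- `Δ ⊗ id` as an algebra map `K ⊗ K → K ⊗ (K ⊗ K)`. -/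
def comul12 : K ⊗[𝕜] K →ₐ[𝕜] K ⊗[𝕜] (K ⊗[𝕜] K) :=
  (Algebra.TensorProduct.assoc 𝕜 𝕜 𝕜 K K K).toAlgHom.comp
    (Algebra.TensorProduct.map (Bialgebra.comulAlgHom 𝕜 K) (AlgHom.id 𝕜 K))

/-- `id ⊗ Δ`. -/
def comul23 : K ⊗[𝕜] K →ₐ[𝕜] K ⊗[𝕜] (K ⊗[𝕜] K) :=
  Algebra.TensorProduct.map (AlgHom.id 𝕜 K) (Bialgebra.comulAlgHom 𝕜 K)

/-- `x ⊗ y ↦ x ⊗ y ⊗ 1`. -/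
def ins12 : K ⊗[𝕜] K →ₐ[𝕜] K ⊗[𝕜] (K ⊗[𝕜] K) :=
  Algebra.TensorProduct.map (AlgHom.id 𝕜 K) Algebra.TensorProduct.includeLeft

/-- `x ⊗ y ↦ 1 ⊗ x ⊗ y`. -/
def ins23 : K ⊗[𝕜] K →ₐ[𝕜] K ⊗[𝕜] (K ⊗[𝕜] K) :=
  Algebra.TensorProduct.includeRight

/-- `x ⊗ y ↦ x ⊗ 1 ⊗ y`. -/
def ins13 : K ⊗[𝕜] K →ₐ[𝕜] K ⊗[𝕜] (K ⊗[𝕜] K) :=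
  Algebra.TensorProduct.map (AlgHom.id 𝕜 K) Algebra.TensorProduct.includeRight

/-- Quasitriangular structure: `R` invertible with inverse `Ri`,
quasi-cocommutativity `τ(Δ k) R = R Δ k`, and the two hexagon relations. -/
structure QuasiTri (R Ri : K ⊗[𝕜] K) : Prop where
  mul_inv : R * Ri = 1
  inv_mul : Ri * R = 1
  quasi : ∀ k : K, (TensorProduct.comm 𝕜 K K) (Coalgebra.comul k) * R
      = R * (Coalgebra.comul k : K ⊗[𝕜] K)
  hex1 : comul12 𝕜 K R = ins13 𝕜 K R * ins23 𝕜 K R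
  hex2 : comul23 𝕜 K R = ins13 𝕜 K R * ins12 𝕜 K R
/-- `(ε ⊗ id)`. -/
def epsLlin : K ⊗[𝕜] K →ₗ[𝕜] K :=
  (TensorProduct.lid 𝕜 K).toLinearMap.comp
    (TensorProduct.map (Coalgebra.counit : K →ₗ[𝕜] 𝕜) LinearMap.id)

/-- `(id ⊗ ε)`. -/
def epsRlin : K ⊗[𝕜] K →ₗ[𝕜] K :=
  (TensorProduct.rid 𝕜 K).toLinearMap.comp
    (TensorProduct.map LinearMap.id (Coalgebra.counit : K →ₗ[𝕜] 𝕜))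

/-- A Drinfeld twist `F` (with inverse `Fi`) for the bialgebra `K`:
invertible, unital, and satisfying the cocycle condition
`(F ⊗ 1)(Δ ⊗ id)(F) = (1 ⊗ F)(id ⊗ Δ)(F)`. -/
structure IsTwist (F Fi : K ⊗[𝕜] K) : Prop where
  mul_inv : F * Fi = 1
  inv_mul : Fi * F = 1
  unitalL : epsLlin 𝕜 K F = 1
  unitalR : epsRlin 𝕜 K F = 1
  cocycle : ins12 𝕜 K F * comul12 𝕜 K F = ins23 𝕜 K F * comul23 𝕜 K F

/-- The twisted coproduct `Δ_F(k) = F Δ(k) F⁻¹`. -/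
def twistComul (F Fi : K ⊗[𝕜] K) : K →ₗ[𝕜] K ⊗[𝕜] K :=
  (LinearMap.mulLeft 𝕜 F).comp
    ((LinearMap.mulRight 𝕜 Fi).comp (Coalgebra.comul : K →ₗ[𝕜] K ⊗[𝕜] K))
/-- Given an action `β` of `K` and a bilinear operation `μ` on `M`, the map
sending `t = Σ k₁ ⊗ k₂` and `a, b` to `Σ μ (k₁ ▷ a) (k₂ ▷ b)` (Sweedler-style
combination). -/
def sweedlerOp {M : Type*} [AddCommGroup M] [Module 𝕜 M]
    (β : K →ₗ[𝕜] M →ₗ[𝕜] M) (μ : M →ₗ[𝕜] M →ₗ[𝕜] M) :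
    K ⊗[𝕜] K →ₗ[𝕜] M →ₗ[𝕜] M →ₗ[𝕜] M :=
  TensorProduct.lift <| LinearMap.mk₂ 𝕜
    (fun k1 k2 => (μ.comp (β k1)).compl₂ (β k2))
    (fun k k' l => by ext a b; simp [LinearMap.compl₂_apply, map_add])
    (fun c k l => by ext a b; simp [LinearMap.compl₂_apply, map_smul])
    (fun k l l' => by ext a b; simp [LinearMap.compl₂_apply, map_add])
    (fun c k l => by ext a b; simp [LinearMap.compl₂_apply, map_smul])

/-- A module-algebra action of the bialgebra `K` on the algebra `A`:
`act` is a representation of `K`, `k ▷ (ab) = (k₍₁₎ ▷ a)(k₍₂₎ ▷ b)` and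
`k ▷ 1 = ε(k) 1`. -/
structure MAlgAction {A : Type*} [Ring A] [Algebra 𝕜 A]
    (act : K →ₗ[𝕜] A →ₗ[𝕜] A) : Prop where
  act_act : ∀ k l : K, act (k * l) = (act k).comp (act l)
  act_one : act 1 = LinearMap.id
  act_mul : ∀ (k : K) (a b : A),
    act k (a * b) = sweedlerOp 𝕜 K act (LinearMap.mul 𝕜 A) (Coalgebra.comul k) a b
  act_unit : ∀ k : K, act k 1 = Coalgebra.counit (R := 𝕜) k • (1 : A)
section StarStructures

variable (H : Type*) [Ring H] [HopfAlgebra ℂ H] [StarRing H] [StarModule ℂ H]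

/-- `starT` is the conjugate-linear extension of `x ⊗ y ↦ x* ⊗ y*` to
`H ⊗ H`. -/
structure IsStarT (starT : H ⊗[ℂ] H → H ⊗[ℂ] H) : Prop where
  map_add : ∀ s t : H ⊗[ℂ] H, starT (s + t) = starT s + starT t
  map_smul : ∀ (c : ℂ) (t : H ⊗[ℂ] H),
    starT (c • t) = (starRingEnd ℂ c) • starT t
  map_tmul : ∀ x y : H, starT (x ⊗ₜ[ℂ] y) = star x ⊗ₜ[ℂ] star y

end StarStructures

section Aux

variable {H : Type*} [Ring H] [HopfAlgebra ℂ H]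
variable {A : Type*} [Ring A] [Algebra ℂ A]

/-- The representation of `H ⊗ H` on `A ⊗ A` induced by `act`. -/
def piMap (act : H →ₗ[ℂ] A →ₗ[ℂ] A) :
    H ⊗[ℂ] H →ₗ[ℂ] (A ⊗[ℂ] A) →ₗ[ℂ] A ⊗[ℂ] A :=
  (TensorProduct.homTensorHomMap (RingHom.id ℂ) A A A A).comp (TensorProduct.map act act)

lemma piMap_tmul (act : H →ₗ[ℂ] A →ₗ[ℂ] A) (k l : H) :
    piMap act (k ⊗ₜ[ℂ] l) = TensorProduct.map (act k) (act l) := by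
  simp [piMap]

lemma piMap_one (act : H →ₗ[ℂ] A →ₗ[ℂ] A) (hact : MAlgAction ℂ H act) :
    piMap act (1 : H ⊗[ℂ] H) = LinearMap.id := by
  rw [Algebra.TensorProduct.one_def, piMap_tmul, hact.act_one, TensorProduct.map_id]

lemma piMap_mul (act : H →ₗ[ℂ] A →ₗ[ℂ] A) (hact : MAlgAction ℂ H act)
    (s t : H ⊗[ℂ] H) :
    piMap act (s * t) = (piMap act s).comp (piMap act t) := by
  induction s using TensorProduct.induction_on with
  | zero => simp
  | tmul k l =>
      induction t using TensorProduct.induction_on with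
      | zero => simp
      | tmul k' l' =>
          rw [Algebra.TensorProduct.tmul_mul_tmul, piMap_tmul, piMap_tmul, piMap_tmul,
            hact.act_act, hact.act_act, TensorProduct.map_comp]
      | add u v hu hv =>
          rw [mul_add, map_add, hu, hv, map_add, LinearMap.comp_add]
  | add u v hu hv =>
      rw [add_mul, map_add, hu, hv, map_add, LinearMap.add_comp]

lemma sweedler_eq_piMap (act : H →ₗ[ℂ] A →ₗ[ℂ] A) (t : H ⊗[ℂ] H) (a b : A) :
    sweedlerOp ℂ H act (LinearMap.mul ℂ A) t a b
      = LinearMap.mul' ℂ A (piMap act t (a ⊗ₜ[ℂ] b)) := by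
  induction t using TensorProduct.induction_on with
  | zero => simp
  | tmul k l => simp [sweedlerOp, piMap]
  | add u v hu hv => simp [map_add, hu, hv]

end Aux

section Statement

variable (H : Type*) [Ring H] [HopfAlgebra ℂ H] [StarRing H] [StarModule ℂ H]

/-- For a Hopf *-algebra `H` with twist `F` satisfying
`F^{*⊗*} = (S ⊗ S)(F₂₁)` and a module *-algebra `A`, the original involution
of `A` is antimultiplicative for the twisted product:
`(a •_F b)* = b* •_F a*`. -/
theorem twisted_product_star_antimultiplicative
    (starT : H ⊗[ℂ] H → H ⊗[ℂ] H) (hstarT : IsStarT H starT)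
    (hcomulstar : ∀ k : H,
      (Coalgebra.comul (R := ℂ) (star k) : H ⊗[ℂ] H)
        = starT (Coalgebra.comul k))
    (F Fi : H ⊗[ℂ] H) (hF : IsTwist ℂ H F Fi)
    (hFstar : starT F
      = LinearMap.lTensor H (HopfAlgebra.antipode (R := ℂ))
          (LinearMap.rTensor H (HopfAlgebra.antipode (R := ℂ))
            ((TensorProduct.comm ℂ H H) F)))
    -- inverse of the antipode
    (Sinv : H →ₗ[ℂ] H)
    (hS₁ : ∀ k : H, HopfAlgebra.antipode (R := ℂ) (Sinv k) = k)
    (hS₂ : ∀ k : H, Sinv (HopfAlgebra.antipode (R := ℂ) k) = k)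
    -- `A` is an `H`-module *-algebra
    {A : Type*} [Ring A] [Algebra ℂ A] [StarRing A] [StarModule ℂ A]
    (act : H →ₗ[ℂ] A →ₗ[ℂ] A) (hact : MAlgAction ℂ H act)
    (hstaract : ∀ (k : H) (a : A),
      star (act k a) = act (Sinv (star k)) (star a)) :
    ∀ a b : A,
      star (sweedlerOp ℂ H act (LinearMap.mul ℂ A) Fi a b)
        = sweedlerOp ℂ H act (LinearMap.mul ℂ A) Fi (star b) (star a) := by
  intro a b
  set S : H →ₗ[ℂ] H := HopfAlgebra.antipode (R := ℂ) with hSdef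
  -- `S 1 = 1` and `Sinv 1 = 1`
  have hS1 : S (1 : H) = 1 := by
    have h := HopfAlgebra.mul_antipode_rTensor_comul_apply (R := ℂ) (a := (1 : H))
    rw [Bialgebra.comul_one, Algebra.TensorProduct.one_def] at h
    exact HopfAlgebra.antipode_one
  have hSinv1 : Sinv (1 : H) = 1 := by
    have := hS₂ 1
    rwa [hS1] at this
  -- starT of 0
  have hstarT0 : starT 0 = 0 := by
    simpa using hstarT.map_smul 0 0
  -- the auxiliary map ψ
  set ψ : H ⊗[ℂ] H → H ⊗[ℂ] H :=
    fun t => (TensorProduct.comm ℂ H H) (TensorProduct.map Sinv Sinv (starT t)) with hψdef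
  have hψtmul : ∀ x y : H, ψ (x ⊗ₜ[ℂ] y) = Sinv (star y) ⊗ₜ[ℂ] Sinv (star x) := by
    intro x y
    simp [hψdef, hstarT.map_tmul]
  have hψ0 : ψ 0 = 0 := by simp [hψdef, hstarT0]
  have hψadd : ∀ s t, ψ (s + t) = ψ s + ψ t := by
    intro s t
    simp [hψdef, hstarT.map_add]
  have hψone : ψ (1 : H ⊗[ℂ] H) = 1 := by
    rw [Algebra.TensorProduct.one_def, hψtmul, star_one, hSinv1]
  -- ψ F = F
  have hχ : ∀ t : H ⊗[ℂ] H,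
      (TensorProduct.comm ℂ H H) (TensorProduct.map Sinv Sinv
        (LinearMap.lTensor H S (LinearMap.rTensor H S ((TensorProduct.comm ℂ H H) t)))) = t := by
    intro t
    induction t using TensorProduct.induction_on with
    | zero => simp
    | tmul x y => simp [hS₂]
    | add u v hu hv => simp only [map_add, hu, hv]
  have hψF : ψ F = F := by
    rw [hψdef]
    simp only [hFstar]
    exact hχ F
  -- multiplicativity of `act ∘ Sinv ∘ star`
  have hθ : ∀ k l : H, act (Sinv (star (k * l)))
      = (act (Sinv (star k))).comp (act (Sinv (star l))) := by
    intro k l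
    ext c
    have e1 : act (Sinv (star (k * l))) c
        = star (act (k * l) (star c)) := by
      rw [hstaract, star_star]
    have e2 : star (act l (star c)) = act (Sinv (star l)) c := by
      rw [hstaract, star_star]
    rw [LinearMap.comp_apply, e1, hact.act_act, LinearMap.comp_apply,
      hstaract, e2]
  -- Ψ := piMap ∘ ψ is multiplicative
  have hΨmul : ∀ s t : H ⊗[ℂ] H,
      piMap act (ψ (s * t)) = (piMap act (ψ s)).comp (piMap act (ψ t)) := by
    intro s t
    induction s using TensorProduct.induction_on with
    | zero => simp [hψ0]
    | tmul k l =>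
        induction t using TensorProduct.induction_on with
        | zero => simp [hψ0]
        | tmul k' l' =>
            rw [Algebra.TensorProduct.tmul_mul_tmul, hψtmul, hψtmul, hψtmul,
              piMap_tmul, piMap_tmul, piMap_tmul, hθ l l', hθ k k',
              TensorProduct.map_comp]
        | add u v hu hv =>
            rw [mul_add, hψadd, map_add, hu, hv, hψadd, map_add, LinearMap.comp_add]
    | add u v hu hv =>
        rw [add_mul, hψadd, map_add, hu, hv, hψadd, map_add, LinearMap.add_comp]
  -- key identity: piMap (ψ Fi) = piMap Fi
  have h1 : (piMap act (ψ Fi)).comp (piMap act (ψ F)) = LinearMap.id := by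
    rw [← hΨmul, hF.inv_mul, hψone, piMap_one act hact]
  have h2 : (piMap act F).comp (piMap act Fi) = LinearMap.id := by
    rw [← piMap_mul act hact, hF.mul_inv, piMap_one act hact]
  have hkey : piMap act (ψ Fi) = piMap act Fi := by
    calc piMap act (ψ Fi)
        = (piMap act (ψ Fi)).comp ((piMap act F).comp (piMap act Fi)) := by
          rw [h2, LinearMap.comp_id]
      _ = ((piMap act (ψ Fi)).comp (piMap act (ψ F))).comp (piMap act Fi) := by
          rw [hψF, LinearMap.comp_assoc]
      _ = piMap act Fi := by rw [h1, LinearMap.id_comp]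
  -- star of the twisted product
  have hstar_sw : ∀ t : H ⊗[ℂ] H,
      star (sweedlerOp ℂ H act (LinearMap.mul ℂ A) t a b)
        = sweedlerOp ℂ H act (LinearMap.mul ℂ A) (ψ t) (star b) (star a) := by
    intro t
    induction t using TensorProduct.induction_on with
    | zero => simp [hψ0]
    | tmul k l =>
        rw [hψtmul]
        simp only [sweedlerOp, TensorProduct.lift.tmul, LinearMap.mk₂_apply,
          LinearMap.compl₂_apply, LinearMap.comp_apply, LinearMap.mul_apply']
        rw [star_mul, hstaract, hstaract]
    | add u v hu hv =>
        rw [hψadd]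
        simp only [map_add, LinearMap.add_apply, star_add, hu, hv]
  rw [hstar_sw Fi, sweedler_eq_piMap, sweedler_eq_piMap, hkey]

end Statement
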